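/- Let D be a digraph with at least one directed cycle, with girth g and circumference c, and suppose g − 1 ≤ c − g + 2. Then χ_A(D) ≤ c − g + 2. -/

import Mathlib

/-!
A digraph on a finite vertex type `V` is given by its arc relation `A : V → V → Prop`,
which is irreflexive (loopless).
-/

/-- `CycleOn A U ℓ` : there is a directed cycle of length `ℓ` (a sequence of `ℓ` distinct
vertices, cyclically consecutive ones joined by arcs) all of whose vertices lie in `U`. -/
def CycleOn {V : Type*} (A : V → V → Prop) (U : Set V) (ℓ : ℕ) : Prop :=
  2 ≤ ℓ ∧ ∃ u : ZMod ℓ → V, Function.Injective u ∧ (∀ i, u i ∈ U) ∧ ∀ i, A (u i) (u (i + 1))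

/-- `HasCycleLen A ℓ` : the digraph has a directed cycle of length `ℓ`. -/
def HasCycleLen {V : Type*} (A : V → V → Prop) (ℓ : ℕ) : Prop :=
  CycleOn A Set.univ ℓ

/-- A set of vertices is acyclic if the induced subdigraph has no directed cycle. -/
def AcyclicSet {V : Type*} (A : V → V → Prop) (U : Set V) : Prop :=
  ∀ ℓ, ¬ CycleOn A U ℓ

/-- The dichromatic number: the least `k` such that the vertices can be colored with `k`
colors so that every color class is acyclic. -/
noncomputable def dichromatic {V : Type*} (A : V → V → Prop) : ℕ :=
  sInf {k | ∃ c : V → Fin k, ∀ i, AcyclicSet A {v | c v = i}}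

/-- Strong connectivity: every vertex is reachable from every other by a directed path. -/
def StronglyConnected {V : Type*} (A : V → V → Prop) : Prop :=
  ∀ u v, Relation.ReflTransGen A u v

section DFSProof

variable {V : Type*}

structure DFSInv [DecidableEq V] (A : V → V → Prop) (W F : Finset V) (S : List V)
    (dt ft : V → ℕ) (par : V → Option V) (dep : V → ℕ) (t : ℕ) : Prop where
  hW : W = F ∪ S.toFinset
  hFS : ∀ x ∈ F, x ∉ S
  hsort : S.Pairwise (fun a b => dt a < dt b)
  hdt_lt : ∀ x ∈ W, dt x < t
  hft : ∀ x ∈ F, dt x < ft x ∧ ft x < t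
  hinj : ∀ x ∈ W, ∀ y ∈ W, dt x = dt y → x = y
  hlam : ∀ u ∈ F, ∀ v ∈ F, u ≠ v →
      ft u < dt v ∨ ft v < dt u ∨ (dt u < dt v ∧ ft v < ft u) ∨ (dt v < dt u ∧ ft u < ft v)
  hSF : ∀ s ∈ S, ∀ u ∈ F, dt u < dt s → ft u < dt s
  hout : ∀ x ∈ F, ∀ y, A x y → y ∈ W ∧ dt y < ft x
  hpar : ∀ x ∈ W, ∀ u, par x = some u → u ∈ W ∧ A u x ∧ dep x = dep u + 1 ∧ dt u < dt x ∧
      ∀ w ∈ W, dt u < dt w → dt w < dt x → w ∈ F ∧ ft w < dt x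
  hroot : ∀ x ∈ W, par x = none → dep x = 0 ∧ ∀ w ∈ W, dt w < dt x → w ∈ F ∧ ft w < dt x

variable [DecidableEq V] [Fintype V] {A : V → V → Prop}

lemma explore (n : ℕ) :
    ∀ (W F : Finset V) (S : List V) (dt ft : V → ℕ) (par : V → Option V) (dep : V → ℕ)
      (t : ℕ) (v : V) (po : Option V),
    (Finset.univ \ W).card ≤ n → v ∉ W →
    DFSInv A W F S dt ft par dep t →
    ((po = none ∧ S = []) ∨ (∃ u S', po = some u ∧ S = S' ++ [u] ∧ A u v)) →
    ∃ (W' F' : Finset V) (dt' ft' : V → ℕ) (par' : V → Option V) (dep' : V → ℕ) (t' : ℕ),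
      DFSInv A W' F' S dt' ft' par' dep' t' ∧
      W ⊆ W' ∧ F ⊆ F' ∧ v ∈ F' ∧ t ≤ t' ∧
      (∀ x ∈ W, dt' x = dt x) ∧ (∀ x ∈ F, ft' x = ft x) ∧
      (∀ x ∈ W, par' x = par x) ∧ (∀ x ∈ W, dep' x = dep x) := by
  classical
  induction n using Nat.strong_induction_on with
  | _ n IH =>
  intro W F S dt ft par dep t v po hcard hv hI hpo
  have hvS : v ∉ S := fun h => hv (by rw [hI.hW]; exact Finset.mem_union_right _ (List.mem_toFinset.2 h))
  have hvF : v ∉ F := fun h => hv (by rw [hI.hW]; exact Finset.mem_union_left _ h)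
  have hSW : ∀ x ∈ S, x ∈ W := fun x hx => by
    rw [hI.hW]; exact Finset.mem_union_right _ (List.mem_toFinset.2 hx)
  have hFW : ∀ x ∈ F, x ∈ W := fun x hx => by rw [hI.hW]; exact Finset.mem_union_left _ hx
  -- push v onto the stack
  set newdep : ℕ := po.elim 0 (fun u => dep u + 1) with hnewdep
  set dt1 : V → ℕ := fun x => if x = v then t else dt x with hdt1
  set par1 : V → Option V := fun x => if x = v then po else par x with hpar1
  set dep1 : V → ℕ := fun x => if x = v then newdep else dep x with hdep1
  have hdt1W : ∀ x ∈ W, dt1 x = dt x := by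
    intro x hx; simp only [hdt1]; rw [if_neg]; rintro rfl; exact hv hx
  have hpar1W : ∀ x ∈ W, par1 x = par x := by
    intro x hx; simp only [hpar1]; rw [if_neg]; rintro rfl; exact hv hx
  have hdep1W : ∀ x ∈ W, dep1 x = dep x := by
    intro x hx; simp only [hdep1]; rw [if_neg]; rintro rfl; exact hv hx
  have hdt1v : dt1 v = t := by simp [hdt1]
  have hpar1v : par1 v = po := by simp [hpar1]
  have hdep1v : dep1 v = newdep := by simp [hdep1]
  have hI1 : DFSInv A (insert v W) F (S ++ [v]) dt1 ft par1 dep1 (t + 1) := by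
    constructor
    · rw [hI.hW]; ext x; simp [List.toFinset_append]
    · intro x hx
      simp only [List.mem_append, List.mem_singleton]
      exact fun h => h.elim (hI.hFS x hx) (fun h' => hvF (h' ▸ hx))
    · rw [List.pairwise_append]
      refine ⟨?_, List.pairwise_singleton _ _, ?_⟩
      · refine hI.hsort.imp_of_mem ?_
        intro a b ha hb hab
        rwa [hdt1W a (hSW a ha), hdt1W b (hSW b hb)]
      · intro a ha b hb
        simp only [List.mem_singleton] at hb
        subst hb
        rw [hdt1W a (hSW a ha), hdt1v]
        exact hI.hdt_lt a (hSW a ha)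
    · intro x hx
      rcases Finset.mem_insert.1 hx with h | h
      · subst h; rw [hdt1v]; omega
      · rw [hdt1W x h]; exact Nat.lt_succ_of_lt (hI.hdt_lt x h)
    · intro x hx
      rw [hdt1W x (hFW x hx)]
      exact ⟨(hI.hft x hx).1, Nat.lt_succ_of_lt (hI.hft x hx).2⟩
    · intro x hx y hy hxy
      rcases Finset.mem_insert.1 hx with h | h <;> rcases Finset.mem_insert.1 hy with h' | h'
      · rw [h, h']
      · subst h; rw [hdt1v, hdt1W y h'] at hxy
        exact absurd hxy.symm (Nat.ne_of_lt (hI.hdt_lt y h'))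
      · subst h'; rw [hdt1v, hdt1W x h] at hxy
        exact absurd hxy (Nat.ne_of_lt (hI.hdt_lt x h))
      · rw [hdt1W x h, hdt1W y h'] at hxy
        exact hI.hinj x h y h' hxy
    · intro u hu w hw hne
      rw [hdt1W u (hFW u hu), hdt1W w (hFW w hw)]
      exact hI.hlam u hu w hw hne
    · intro s hs u hu
      rcases List.mem_append.1 hs with h | h
      · rw [hdt1W s (hSW s h), hdt1W u (hFW u hu)]
        exact hI.hSF s h u hu
      · simp only [List.mem_singleton] at h; subst h
        rw [hdt1v, hdt1W u (hFW u hu)]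
        intro _; exact (hI.hft u hu).2
    · intro x hx y hy
      obtain ⟨h1, h2⟩ := hI.hout x hx y hy
      exact ⟨Finset.mem_insert_of_mem h1, by rw [hdt1W y h1]; exact h2⟩
    · intro x hx u hu
      rcases Finset.mem_insert.1 hx with h | h
      · -- x = v
        subst x
        rw [hpar1v] at hu
        rcases hpo with ⟨hpo1, _⟩ | ⟨u0, S', hpo1, hS, hAu0⟩
        · rw [hpo1] at hu; exact absurd hu (by simp)
        · rw [hpo1] at hu
          injection hu with hu; subst hu
          have huS : u0 ∈ S := by rw [hS]; exact List.mem_append_right _ (List.mem_singleton_self _)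
          have huW := hSW u0 huS
          refine ⟨Finset.mem_insert_of_mem huW, hAu0, ?_, ?_, ?_⟩
          · rw [hdep1v, hdep1W u0 huW, hnewdep, hpo1]; rfl
          · rw [hdt1v, hdt1W u0 huW]; exact hI.hdt_lt u0 huW
          · intro w hw h1 h2
            rw [hdt1v] at h2
            have hwv : w ≠ v := fun h => by rw [h, hdt1v] at h2; omega
            have hwW : w ∈ W := (Finset.mem_insert.1 hw).resolve_left hwv
            rw [hdt1W w hwW, hdt1W u0 huW] at h1
            rw [hdt1W w hwW] at h2
            have hwF : w ∈ F := by
              have hmem := hI.hW ▸ hwW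
              rcases Finset.mem_union.1 hmem with h | h
              · exact h
              · exfalso
                have hwS := List.mem_toFinset.1 h
                rw [hS] at hwS
                rcases List.mem_append.1 hwS with h' | h'
                · have := (List.pairwise_append.1 (hS ▸ hI.hsort)).2.2 w h' u0 (List.mem_singleton_self _)
                  omega
                · simp only [List.mem_singleton] at h'; subst h'; omega
            refine ⟨hwF, ?_⟩
            rw [hdt1v]
            exact (hI.hft w hwF).2
      · -- x ∈ W, old
        rw [hpar1W x h] at hu
        obtain ⟨huW, hA, hdep, hdt, hbet⟩ := hI.hpar x h u hu
        refine ⟨Finset.mem_insert_of_mem huW, hA, ?_, ?_, ?_⟩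
        · rw [hdep1W x h, hdep1W u huW]; exact hdep
        · rw [hdt1W x h, hdt1W u huW]; exact hdt
        · intro w hw h1 h2
          rw [hdt1W x h] at h2
          have hwv : w ≠ v := fun hh => by
            rw [hh, hdt1v] at h2; exact absurd h2 (not_lt.2 (le_of_lt (hI.hdt_lt x h)))
          have hwW : w ∈ W := (Finset.mem_insert.1 hw).resolve_left hwv
          rw [hdt1W w hwW, hdt1W u huW] at h1
          rw [hdt1W w hwW] at h2
          obtain ⟨hwF, hfw⟩ := hbet w hwW h1 h2
          exact ⟨hwF, by rw [hdt1W x h]; exact hfw⟩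
    · intro x hx hu
      rcases Finset.mem_insert.1 hx with h | h
      · subst x
        rw [hpar1v] at hu
        rcases hpo with ⟨hpo1, hS⟩ | ⟨u0, S', hpo1, hS, hAu0⟩
        · constructor
          · rw [hdep1v, hnewdep, hu]; rfl
          · intro w hw h1
            rw [hdt1v] at h1
            have hwv : w ≠ v := fun hh => by rw [hh, hdt1v] at h1; omega
            have hwW : w ∈ W := (Finset.mem_insert.1 hw).resolve_left hwv
            have hwF : w ∈ F := by
              have hmem := hI.hW ▸ hwW
              rw [hS] at hmem
              simpa using hmem
            exact ⟨hwF, by rw [hdt1v]; exact (hI.hft w hwF).2⟩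
        · rw [hpo1] at hu; exact absurd hu (by simp)
      · rw [hpar1W x h] at hu
        obtain ⟨hdep, hroot⟩ := hI.hroot x h hu
        constructor
        · rw [hdep1W x h]; exact hdep
        · intro w hw h1
          rw [hdt1W x h] at h1
          have hwv : w ≠ v := fun hh => by
            rw [hh, hdt1v] at h1; exact absurd h1 (not_lt.2 (le_of_lt (hI.hdt_lt x h)))
          have hwW : w ∈ W := (Finset.mem_insert.1 hw).resolve_left hwv
          rw [hdt1W w hwW] at h1
          obtain ⟨hwF, hfw⟩ := hroot w hwW h1
          exact ⟨hwF, by rw [hdt1W x h]; exact hfw⟩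
  -- loop over out-neighbours
  have loop : ∀ (ns : List V), (∀ u ∈ ns, A v u) →
      ∀ (W1 F1 : Finset V) (dta fta : V → ℕ) (para : V → Option V) (depa : V → ℕ) (t1 : ℕ),
        DFSInv A W1 F1 (S ++ [v]) dta fta para depa t1 → insert v W ⊆ W1 →
        ∃ (W2 F2 : Finset V) (dtb ftb : V → ℕ) (parb : V → Option V) (depb : V → ℕ) (t2 : ℕ),
          DFSInv A W2 F2 (S ++ [v]) dtb ftb parb depb t2 ∧
          W1 ⊆ W2 ∧ F1 ⊆ F2 ∧ t1 ≤ t2 ∧ (∀ u ∈ ns, u ∈ W2) ∧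
          (∀ x ∈ W1, dtb x = dta x) ∧ (∀ x ∈ F1, ftb x = fta x) ∧
          (∀ x ∈ W1, parb x = para x) ∧ (∀ x ∈ W1, depb x = depa x) := by
    intro ns
    induction ns with
    | nil =>
      intro _ W1 F1 dta fta para depa t1 hIa hsub
      exact ⟨W1, F1, dta, fta, para, depa, t1, hIa, Finset.Subset.refl _, Finset.Subset.refl _,
        le_refl _, by simp, fun x _ => rfl, fun x _ => rfl, fun x _ => rfl, fun x _ => rfl⟩
    | cons u ns ihl =>
      intro hns W1 F1 dta fta para depa t1 hIa hsub
      have hns' : ∀ x ∈ ns, A v x := fun x hx => hns x (List.mem_cons_of_mem _ hx)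
      by_cases hu : u ∈ W1
      · obtain ⟨W2, F2, dtb, ftb, parb, depb, t2, hIb, h1, h2, h3, h4, h5, h6, h7, h8⟩ :=
          ihl hns' W1 F1 dta fta para depa t1 hIa hsub
        exact ⟨W2, F2, dtb, ftb, parb, depb, t2, hIb, h1, h2, h3,
          fun x hx => by
            rcases List.mem_cons.1 hx with rfl | hx
            · exact h1 hu
            · exact h4 x hx,
          h5, h6, h7, h8⟩
      · have hvW1 : v ∈ W1 := hsub (Finset.mem_insert_self _ _)
        have hlt : (Finset.univ \ W1).card < n := by
          have hss : Finset.univ \ W1 ⊂ Finset.univ \ W := by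
            constructor
            · exact Finset.sdiff_subset_sdiff (Finset.Subset.refl _)
                (fun x hx => hsub (Finset.mem_insert_of_mem hx))
            · intro hcon
              have : v ∈ Finset.univ \ W := Finset.mem_sdiff.2 ⟨Finset.mem_univ _, hv⟩
              have := hcon this
              exact (Finset.mem_sdiff.1 this).2 hvW1
          exact lt_of_lt_of_le (Finset.card_lt_card hss) hcard
        obtain ⟨W2, F2, dtb, ftb, parb, depb, t2, hIb, h1, h2, huF2, h3, h5, h6, h7, h8⟩ :=
          IH _ hlt W1 F1 (S ++ [v]) dta fta para depa t1 u (some v) (le_refl _) hu hIa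
            (Or.inr ⟨v, S, rfl, rfl, hns u List.mem_cons_self⟩)
        obtain ⟨W3, F3, dtc, ftc, parc, depc, t3, hIc, g1, g2, g3, g4, g5, g6, g7, g8⟩ :=
          ihl hns' W2 F2 dtb ftb parb depb t2 hIb (hsub.trans h1)
        have hFW2 : F2 ⊆ W2 := by rw [hIb.hW]; exact Finset.subset_union_left
        refine ⟨W3, F3, dtc, ftc, parc, depc, t3, hIc, h1.trans g1, h2.trans g2,
          h3.trans g3, ?_, ?_, ?_, ?_, ?_⟩
        · intro x hx
          rcases List.mem_cons.1 hx with rfl | hx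
          · exact g1 (hFW2 huF2)
          · exact g4 x hx
        · intro x hx; rw [g5 x (h1 hx), h5 x hx]
        · intro x hx; rw [g6 x (h2 hx), h6 x hx]
        · intro x hx; rw [g7 x (h1 hx), h7 x hx]
        · intro x hx; rw [g8 x (h1 hx), h8 x hx]
  -- run the loop on all out-neighbours of v
  obtain ⟨W2, F2, dtb, ftb, parb, depb, t2, hI2, hW12, hF12, ht12, hns2, e5, e6, e7, e8⟩ :=
    loop ((Finset.univ.filter (fun u => A v u)).toList)
      (fun u hu => (Finset.mem_filter.1 (Finset.mem_toList.1 hu)).2)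
      (insert v W) F dt1 ft par1 dep1 (t + 1) hI1 (Finset.Subset.refl _)
  have hnbrs : ∀ y, A v y → y ∈ W2 := fun y hy =>
    hns2 y (Finset.mem_toList.2 (Finset.mem_filter.2 ⟨Finset.mem_univ _, hy⟩))
  have hvW2 : v ∈ W2 := hW12 (Finset.mem_insert_self _ _)
  have hvF2 : v ∉ F2 := fun h => hI2.hFS v h (List.mem_append_right _ (List.mem_singleton_self _))
  have hvSv : v ∈ S ++ [v] := List.mem_append_right _ (List.mem_singleton_self _)
  -- pop v
  set ft3 : V → ℕ := fun x => if x = v then t2 else ftb x with hft3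
  have hft3v : ft3 v = t2 := by simp [hft3]
  have hft3F : ∀ x ∈ F2, ft3 x = ftb x := by
    intro x hx; simp only [hft3]; rw [if_neg]; rintro rfl; exact hvF2 hx
  have hI3 : DFSInv A W2 (insert v F2) S dtb ft3 parb depb (t2 + 1) := by
    have hsortv := hI2.hsort
    have hpairs := List.pairwise_append.1 hsortv
    constructor
    · rw [hI2.hW]; ext x; simp [List.toFinset_append]
    · intro x hx
      rcases Finset.mem_insert.1 hx with rfl | h
      · exact hvS
      · intro hxS; exact hI2.hFS x h (List.mem_append_left _ hxS)
    · exact hsortv.sublist (List.sublist_append_left S [v])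
    · intro x hx; exact Nat.lt_succ_of_lt (hI2.hdt_lt x hx)
    · intro x hx
      rcases Finset.mem_insert.1 hx with rfl | h
      · rw [hft3v]; exact ⟨hI2.hdt_lt x hvW2, Nat.lt_succ_self _⟩
      · rw [hft3F x h]
        exact ⟨(hI2.hft x h).1, Nat.lt_succ_of_lt (hI2.hft x h).2⟩
    · exact hI2.hinj
    · intro a ha b hb hne
      have hFW2 : F2 ⊆ W2 := by rw [hI2.hW]; exact Finset.subset_union_left
      rcases Finset.mem_insert.1 ha with rfl | ha' <;> rcases Finset.mem_insert.1 hb with rfl | hb'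
      · exact absurd rfl hne
      · -- a = v, b ∈ F2
        rcases Nat.lt_trichotomy (dtb b) (dtb a) with h | h | h
        · exact Or.inr (Or.inl (by rw [hft3F b hb']; exact hI2.hSF a hvSv b hb' h))
        · exact absurd (hI2.hinj b (hFW2 hb') a hvW2 h) hne.symm
        · exact Or.inr (Or.inr (Or.inl ⟨h, by rw [hft3F b hb', hft3v]; exact (hI2.hft b hb').2⟩))
      · -- b = v, a ∈ F2
        rcases Nat.lt_trichotomy (dtb a) (dtb b) with h | h | h
        · exact Or.inl (by rw [hft3F a ha']; exact hI2.hSF b hvSv a ha' h)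
        · exact absurd (hI2.hinj a (hFW2 ha') b hvW2 h) hne
        · exact Or.inr (Or.inr (Or.inr ⟨h, by rw [hft3F a ha', hft3v]; exact (hI2.hft a ha').2⟩))
      · have := hI2.hlam a ha' b hb' hne
        rw [hft3F a ha', hft3F b hb']
        exact this
    · intro s hs u hu hdtu
      rcases Finset.mem_insert.1 hu with rfl | hu'
      · have : dtb s < dtb u := hpairs.2.2 s hs u (List.mem_singleton_self _)
        omega
      · rw [hft3F u hu']
        exact hI2.hSF s (List.mem_append_left _ hs) u hu' hdtu
    · intro x hx y hy
      rcases Finset.mem_insert.1 hx with rfl | h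
      · exact ⟨hnbrs y hy, by rw [hft3v]; exact hI2.hdt_lt y (hnbrs y hy)⟩
      · obtain ⟨h1, h2⟩ := hI2.hout x h y hy
        exact ⟨h1, by rw [hft3F x h]; exact h2⟩
    · intro x hx u hu
      obtain ⟨huW, hA, hdep, hdt, hbet⟩ := hI2.hpar x hx u hu
      refine ⟨huW, hA, hdep, hdt, ?_⟩
      intro w hw h1 h2
      obtain ⟨hwF, hfw⟩ := hbet w hw h1 h2
      exact ⟨Finset.mem_insert_of_mem hwF, by rw [hft3F w hwF]; exact hfw⟩
    · intro x hx hu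
      obtain ⟨hdep, hroot⟩ := hI2.hroot x hx hu
      refine ⟨hdep, ?_⟩
      intro w hw h1
      obtain ⟨hwF, hfw⟩ := hroot w hw h1
      exact ⟨Finset.mem_insert_of_mem hwF, by rw [hft3F w hwF]; exact hfw⟩
  refine ⟨W2, insert v F2, dtb, ft3, parb, depb, t2 + 1, hI3, ?_, ?_, Finset.mem_insert_self _ _,
    ?_, ?_, ?_, ?_, ?_⟩
  · exact fun x hx => hW12 (Finset.mem_insert_of_mem hx)
  · exact fun x hx => Finset.mem_insert_of_mem (hF12 hx)
  · omega
  · intro x hx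
    rw [e5 x (Finset.mem_insert_of_mem hx), hdt1W x hx]
  · intro x hx
    rw [hft3F x (hF12 hx), e6 x hx]
  · intro x hx
    rw [e7 x (Finset.mem_insert_of_mem hx), hpar1W x hx]
  · intro x hx
    rw [e8 x (Finset.mem_insert_of_mem hx), hdep1W x hx]

lemma dfs_exists :
    ∃ (dt ft : V → ℕ) (par : V → Option V) (dep : V → ℕ) (t : ℕ),
      DFSInv A Finset.univ Finset.univ ([] : List V) dt ft par dep t := by
  classical
  suffices h : ∀ n (W F : Finset V) (dt ft : V → ℕ) (par : V → Option V) (dep : V → ℕ) (t : ℕ),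
      DFSInv A W F ([] : List V) dt ft par dep t → (Finset.univ \ W).card ≤ n →
      ∃ (dt' ft' : V → ℕ) (par' : V → Option V) (dep' : V → ℕ) (t' : ℕ),
        DFSInv A Finset.univ Finset.univ ([] : List V) dt' ft' par' dep' t' by
    have hI0 : DFSInv A ∅ ∅ ([] : List V) (fun _ => 0) (fun _ => 0) (fun _ => none)
        (fun _ => 0) 0 := by
      constructor <;> simp
    exact h _ ∅ ∅ _ _ _ _ 0 hI0 (le_refl _)
  intro n
  induction n with
  | zero =>
    intro W F dt ft par dep t hI hc
    have hWu : W = Finset.univ := by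
      have : Finset.univ \ W = ∅ := Finset.card_eq_zero.1 (Nat.le_zero.1 hc)
      have := Finset.sdiff_eq_empty_iff_subset.1 this
      exact Finset.univ_subset_iff.1 this
    have hFu : F = Finset.univ := by
      have := hI.hW
      simp only [List.toFinset_nil, Finset.union_empty] at this
      rw [← this, hWu]
    rw [hWu, hFu] at hI
    exact ⟨dt, ft, par, dep, t, hI⟩
  | succ n ih =>
    intro W F dt ft par dep t hI hc
    by_cases hWu : W = Finset.univ
    · have hFu : F = Finset.univ := by
        have := hI.hW
        simp only [List.toFinset_nil, Finset.union_empty] at this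
        rw [← this, hWu]
      rw [hWu, hFu] at hI
      exact ⟨dt, ft, par, dep, t, hI⟩
    · obtain ⟨v, hv⟩ : ∃ v, v ∉ W := by
        by_contra hcon
        push_neg at hcon
        exact hWu (Finset.eq_univ_iff_forall.2 hcon)
      obtain ⟨W', F', dt', ft', par', dep', t', hI', hsub, _, hvF', _, _, _, _, _⟩ :=
        explore (n + 1) W F [] dt ft par dep t v none hc hv hI (Or.inl ⟨rfl, rfl⟩)
      have hvW' : v ∈ W' := by
        rw [hI'.hW]; exact Finset.mem_union_left _ hvF'
      have hlt : (Finset.univ \ W').card ≤ n := by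
        have hss : Finset.univ \ W' ⊂ Finset.univ \ W := by
          constructor
          · exact Finset.sdiff_subset_sdiff (Finset.Subset.refl _) hsub
          · intro hcon
            have h1 : v ∈ Finset.univ \ W := Finset.mem_sdiff.2 ⟨Finset.mem_univ _, hv⟩
            exact (Finset.mem_sdiff.1 (hcon h1)).2 hvW'
        have := Finset.card_lt_card hss
        omega
      exact ih W' F' dt' ft' par' dep' t' hI' hlt

lemma parent_chain {dt ft : V → ℕ} {par : V → Option V} {dep : V → ℕ} {t : ℕ}
    (hI : DFSInv A Finset.univ Finset.univ ([] : List V) dt ft par dep t) :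
    ∀ n (x w : V), dep x = n → dt w < dt x → ft x < ft w →
      ∃ d, 1 ≤ d ∧ ∃ a : ℕ → V, a 0 = w ∧ a d = x ∧
        (∀ i < d, A (a i) (a (i + 1))) ∧ (∀ i ≤ d, dep (a i) = dep w + i) := by
  intro n
  induction n using Nat.strong_induction_on with
  | _ n IHn =>
  intro x w hdepx hdtw hftw
  have hm : ∀ z : V, z ∈ (Finset.univ : Finset V) := Finset.mem_univ
  cases hpx : par x with
  | none =>
    obtain ⟨_, hr⟩ := hI.hroot x (hm x) hpx
    obtain ⟨_, hfw⟩ := hr w (hm w) hdtw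
    have := (hI.hft x (hm x)).1
    omega
  | some u =>
    obtain ⟨-, hA, hdepu, hdtu, hbet⟩ := hI.hpar x (hm x) u hpx
    have hxF := hI.hft x (hm x)
    have huF := hI.hft u (hm u)
    have hwF := hI.hft w (hm w)
    have hdtxftu : dt x < ft u := (hI.hout u (hm u) x hA).2
    have hux : u ≠ x := fun h => by rw [h] at hdtu; omega
    have hftxu : ft x < ft u := by
      rcases hI.hlam u (hm u) x (hm x) hux with h | h | h | h
      · omega
      · omega
      · exact h.2
      · omega
    by_cases hwu : w = u
    · subst hwu
      refine ⟨1, le_refl 1, fun i => if i = 0 then w else x, ?_, ?_, ?_, ?_⟩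
      · simp
      · simp
      · intro i hi
        have : i = 0 := by omega
        subst this
        simpa using hA
      · intro i hi
        interval_cases i
        · simp
        · simpa using hdepu
    · rcases Nat.lt_trichotomy (dt w) (dt u) with h | h | h
      · rcases hI.hlam w (hm w) u (hm u) hwu with hh | hh | hh | hh
        · omega
        · omega
        · obtain ⟨d, hd1, a, ha0, had, harc, hdep⟩ := IHn (dep u) (by omega) u w rfl hh.1 hh.2
          refine ⟨d + 1, by omega, Function.update a (d + 1) x, ?_, ?_, ?_, ?_⟩
          · simp only [Function.update_apply]
            rw [if_neg (by omega)]
            exact ha0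
          · simp [Function.update_apply]
          · intro i hi
            simp only [Function.update_apply]
            by_cases hid : i = d
            · subst hid
              rw [if_neg (by omega), if_pos rfl, had]
              exact hA
            · rw [if_neg (by omega), if_neg (by omega)]
              exact harc i (by omega)
          · intro i hi
            simp only [Function.update_apply]
            by_cases hid : i = d + 1
            · subst hid
              rw [if_pos rfl]
              have h1 := hdep d (le_refl d)
              rw [had] at h1
              omega
            · rw [if_neg hid]
              exact hdep i (by omega)
        · omega
      · exact absurd (hI.hinj w (hm w) u (hm u) h) hwu
      · obtain ⟨-, hfw⟩ := hbet w (hm w) h hdtw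
        omega

lemma cycle_back {dt ft : V → ℕ} {par : V → Option V} {dep : V → ℕ} {t : ℕ}
    (hI : DFSInv A Finset.univ Finset.univ ([] : List V) dt ft par dep t)
    {ℓ : ℕ} (hℓ : 2 ≤ ℓ) (u : ZMod ℓ → V) (huinj : Function.Injective u)
    (harc : ∀ i, A (u i) (u (i + 1))) :
    ∃ (i : ZMod ℓ) (d : ℕ), 1 ≤ d ∧ dep (u i) = dep (u (i + 1)) + d ∧ HasCycleLen A (d + 1) := by
  haveI : NeZero ℓ := ⟨by omega⟩
  have hm : ∀ z : V, z ∈ (Finset.univ : Finset V) := Finset.mem_univ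
  obtain ⟨i0, -, hmin⟩ := Finset.exists_min_image (Finset.univ : Finset (ZMod ℓ))
    (fun j => dt (u j)) ⟨0, Finset.mem_univ 0⟩
  have claim : ∀ k : ℕ, u (i0 + (k : ZMod ℓ)) = u i0 ∨
      (dt (u i0) < dt (u (i0 + (k : ZMod ℓ))) ∧ ft (u (i0 + (k : ZMod ℓ))) < ft (u i0)) := by
    intro k
    induction k with
    | zero => left; norm_num
    | succ k ihk =>
      have hstep : A (u (i0 + (k : ZMod ℓ))) (u (i0 + ((k + 1 : ℕ) : ZMod ℓ))) := by
        have := harc (i0 + (k : ZMod ℓ))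
        have hcast : i0 + (k : ZMod ℓ) + 1 = i0 + ((k + 1 : ℕ) : ZMod ℓ) := by
          push_cast; ring
        rwa [hcast] at this
      by_cases hz : u (i0 + ((k + 1 : ℕ) : ZMod ℓ)) = u i0
      · exact Or.inl hz
      · right
        set z := u (i0 + (k : ZMod ℓ))
        set z' := u (i0 + ((k + 1 : ℕ) : ZMod ℓ))
        have hminz' : dt (u i0) ≤ dt z' := hmin _ (Finset.mem_univ _)
        have hne : dt (u i0) ≠ dt z' := fun h => hz (hI.hinj _ (hm _) _ (hm _) h.symm)
        have h1 : dt (u i0) < dt z' := lt_of_le_of_ne hminz' hne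
        have h2 : dt z' < ft z := (hI.hout z (hm z) z' hstep).2
        have h3 : ft z ≤ ft (u i0) := by
          rcases ihk with h | h
          · rw [h]
          · exact le_of_lt h.2
        have h4 : dt z' < ft (u i0) := lt_of_lt_of_le h2 h3
        have hfz' := hI.hft z' (hm z')
        have hf0 := hI.hft (u i0) (hm _)
        rcases hI.hlam (u i0) (hm _) z' (hm z') (fun h => hz (h.symm)) with h | h | h | h
        · omega
        · omega
        · exact ⟨h.1, h.2⟩
        · omega
  -- apply at k = ℓ - 1
  have hc1 : ((ℓ - 1 : ℕ) : ZMod ℓ) ≠ 0 := by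
    intro h
    have hval := ZMod.val_cast_of_lt (show ℓ - 1 < ℓ by omega)
    rw [h, ZMod.val_zero] at hval
    omega
  set i := i0 + ((ℓ - 1 : ℕ) : ZMod ℓ) with hi
  have hne : u i ≠ u i0 := fun h => by
    have := huinj h
    have : ((ℓ - 1 : ℕ) : ZMod ℓ) = 0 := by
      have h2 : i0 + ((ℓ - 1 : ℕ) : ZMod ℓ) = i0 + 0 := by rw [add_zero]; exact this
      exact add_left_cancel h2
    exact hc1 this
  have hanc := (claim (ℓ - 1)).resolve_left hne
  have hiw : u (i + 1) = u i0 := by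
    have : i + 1 = i0 := by
      rw [hi, add_assoc]
      have : ((ℓ - 1 : ℕ) : ZMod ℓ) + 1 = ((ℓ : ℕ) : ZMod ℓ) := by
        have he : ℓ - 1 + 1 = ℓ := by omega
        calc ((ℓ - 1 : ℕ) : ZMod ℓ) + 1 = ((ℓ - 1 + 1 : ℕ) : ZMod ℓ) := by push_cast; ring
          _ = ((ℓ : ℕ) : ZMod ℓ) := by rw [he]
      rw [this, ZMod.natCast_self, add_zero]
    rw [this]
  obtain ⟨d, hd1, a, ha0, had, hcharc, hcdep⟩ :=
    parent_chain hI (dep (u i)) (u i) (u i0) rfl hanc.1 hanc.2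
  refine ⟨i, d, hd1, ?_, ?_⟩
  · have h1 := hcdep d (le_refl d)
    rw [had] at h1
    rw [hiw, h1]
  · -- build the cycle of length d + 1
    haveI : NeZero (d + 1) := ⟨Nat.succ_ne_zero d⟩
    refine ⟨by omega, fun j => a (ZMod.val j), ?_, fun _ => Set.mem_univ _, ?_⟩
    · intro j j' hjj
      have hjj' : a (ZMod.val j) = a (ZMod.val j') := hjj
      have hvj : (ZMod.val j) ≤ d := by have := ZMod.val_lt j; omega
      have hvj' : (ZMod.val j') ≤ d := by have := ZMod.val_lt j'; omega
      have e1 := hcdep _ hvj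
      have e2 := hcdep _ hvj'
      have : ZMod.val j = ZMod.val j' := by rw [hjj'] at e1; omega
      exact ZMod.val_injective _ this
    · intro j
      show A (a (ZMod.val j)) (a (ZMod.val (j + 1)))
      have hvj : (ZMod.val j) < d + 1 := ZMod.val_lt j
      haveI : Fact (1 < d + 1) := ⟨by omega⟩
      have hadd : (j + 1).val = (j.val + 1) % (d + 1) := by
        rw [ZMod.val_add, ZMod.val_one]
      by_cases hj : ZMod.val j = d
      · rw [hadd, hj]
        simp only [Nat.mod_self]
        rw [had, ha0]
        have := harc i
        rwa [hiw] at this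
      · rw [hadd, Nat.mod_eq_of_lt (by omega)]
        exact hcharc _ (by omega)

end DFSProof

/-- If `D` is a digraph with at least one directed cycle, girth `g` and circumference `c`,
and `g − 1 ≤ c − g + 2`, then `χ_A(D) ≤ c − g + 2`. -/
theorem stmt_3 {V : Type*} [Fintype V] (A : V → V → Prop) (hloopless : Irreflexive A)
    (g c : ℕ)
    (hg : HasCycleLen A g) (hgmin : ∀ ℓ, HasCycleLen A ℓ → g ≤ ℓ)
    (hc : HasCycleLen A c) (hcmax : ∀ ℓ, HasCycleLen A ℓ → ℓ ≤ c)
    (hineq : g - 1 ≤ c - g + 2) :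
    dichromatic A ≤ c - g + 2 := by
  classical
  letI : DecidableEq V := Classical.decEq V
  have hg2 : 2 ≤ g := hg.1
  have hgc : g ≤ c := hgmin c hc
  -- arithmetic facts about the number of colours
  have key1 : (c + g - 3) / (g - 1) + 1 ≤ c - g + 2 := by
    have h1 : (c + g - 3) / (g - 1) < c - g + 1 + 1 := by
      rw [Nat.div_lt_iff_lt_mul (by omega : 0 < g - 1)]
      obtain ⟨s, rfl⟩ : ∃ s, g = s + 2 := ⟨g - 2, by omega⟩
      obtain ⟨tt, rfl⟩ : ∃ tt, c = (s + 2) + tt := ⟨c - (s + 2), by omega⟩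
      rw [show (s + 2) + tt + (s + 2) - 3 = 2 * s + tt + 1 by omega,
        show (s + 2) + tt - (s + 2) + 1 + 1 = tt + 2 by omega,
        show s + 2 - 1 = s + 1 by omega]
      have he : (tt + 2) * (s + 1) = tt * s + tt + 2 * s + 2 := by ring
      have hz : 0 ≤ tt * s := Nat.zero_le _
      omega
    omega
  have key2 : c - 1 ≤ ((c + g - 3) / (g - 1)) * (g - 1) := by
    have h3 : (c + g - 3) % (g - 1) < g - 1 := Nat.mod_lt _ (by omega)
    have h4 := Nat.div_add_mod (c + g - 3) (g - 1)
    have h5 : (g - 1) * ((c + g - 3) / (g - 1)) = ((c + g - 3) / (g - 1)) * (g - 1) :=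
      Nat.mul_comm _ _
    rw [h5] at h4
    generalize hQ : ((c + g - 3) / (g - 1)) * (g - 1) = Q at h4 ⊢
    omega
  obtain ⟨dt, ft, par, dep, t, hI⟩ := dfs_exists (A := A)
  set M := (c + g - 3) / (g - 1) + 1 with hMdef
  have hMpos : 0 < M := by rw [hMdef]; exact Nat.succ_pos _
  have hcolb : ∀ v : V, (dep v / (g - 1)) % M < c - g + 2 :=
    fun v => lt_of_lt_of_le (Nat.mod_lt _ hMpos) key1
  apply Nat.sInf_le
  refine ⟨fun v => (⟨(dep v / (g - 1)) % M, hcolb v⟩ : Fin (c - g + 2)), ?_⟩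
  intro i ℓ hcyc
  obtain ⟨hl2, uu, huinj, humem, huarc⟩ := hcyc
  obtain ⟨j, d, hd1, hdepx, hHCL⟩ := cycle_back hI hl2 uu huinj huarc
  have hgd : g ≤ d + 1 := hgmin _ hHCL
  have hdc : d + 1 ≤ c := hcmax _ hHCL
  have heq : (dep (uu j) / (g - 1)) % M = (dep (uu (j + 1)) / (g - 1)) % M := by
    have e1 := humem j
    have e2 := humem (j + 1)
    simp only [Set.mem_setOf_eq] at e1 e2
    have e3 := e1.trans e2.symm
    exact congrArg Fin.val e3
  have hq : dep (uu (j + 1)) / (g - 1) + 1 ≤ dep (uu j) / (g - 1) := by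
    have h5 : dep (uu (j + 1)) + (g - 1) ≤ dep (uu j) := by omega
    calc dep (uu (j + 1)) / (g - 1) + 1 = (dep (uu (j + 1)) + (g - 1)) / (g - 1) :=
          (Nat.add_div_right _ (by omega)).symm
      _ ≤ dep (uu j) / (g - 1) := Nat.div_le_div_right h5
  have hdvd : M ∣ (dep (uu j) / (g - 1) - dep (uu (j + 1)) / (g - 1)) :=
    (Nat.modEq_iff_dvd' (by omega)).1 heq.symm
  obtain ⟨e, he⟩ := hdvd
  have he1 : 1 ≤ e := by
    rcases Nat.eq_zero_or_pos e with h | h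
    · rw [h, Nat.mul_zero] at he; omega
    · exact h
  have hMe : M ≤ M * e := by
    calc M = M * 1 := (Nat.mul_one M).symm
      _ ≤ M * e := Nat.mul_le_mul_left M he1
  have hq2 : dep (uu (j + 1)) / (g - 1) + M ≤ dep (uu j) / (g - 1) := by
    generalize hE : M * e = E at he hMe
    omega
  have l1 : (dep (uu j) / (g - 1)) * (g - 1) ≤ dep (uu j) := Nat.div_mul_le_self _ _
  have l2 := Nat.div_add_mod (dep (uu (j + 1))) (g - 1)
  have l3 : dep (uu (j + 1)) % (g - 1) < g - 1 := Nat.mod_lt _ (by omega)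
  have l4 : (dep (uu (j + 1)) / (g - 1) + M) * (g - 1) ≤ (dep (uu j) / (g - 1)) * (g - 1) :=
    Nat.mul_le_mul_right _ hq2
  have l5 : (dep (uu (j + 1)) / (g - 1) + M) * (g - 1)
      = (dep (uu (j + 1)) / (g - 1)) * (g - 1) + ((c + g - 3) / (g - 1)) * (g - 1) + (g - 1) := by
    rw [hMdef]; ring
  have l7 : (g - 1) * (dep (uu (j + 1)) / (g - 1))
      = (dep (uu (j + 1)) / (g - 1)) * (g - 1) := Nat.mul_comm _ _
  rw [l5] at l4
  rw [l7] at l2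
  generalize hP1 : (dep (uu j) / (g - 1)) * (g - 1) = P1 at l1 l4
  generalize hP2 : (dep (uu (j + 1)) / (g - 1)) * (g - 1) = P2 at l2 l4
  generalize hQ : ((c + g - 3) / (g - 1)) * (g - 1) = Q at l4 key2
  omega
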